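/- arXiv:2501.13885 — 3 statements merged into one kernel-verified Lean document; each statement's English description precedes it below -/
import Mathlib

section
/- Let A be a unital *-subalgebra of B(H) with CPTP factors R and J of the orthogonal conditional expectation onto A (so E|_A = J∘R, R∘J = id on Ǎ). Then for every Hermitian H₀ ∈ B(H), the superoperator ρ̌ ↦ R([H₀, J(ρ̌)]) equals ρ̌ ↦ [Ȟ, ρ̌] where Ȟ = J*(H₀), and Ȟ is Hermitian. -/
/-! STATEMENT 1: the reduced Hamiltonian superoperator. For the CPTP factors R, J of the
orthogonal conditional expectation onto a unital *-subalgebra (Wedderburn data V, W),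
for every Hermitian H₀, R([H₀, J(ρ̌)]) = [Ȟ, ρ̌] with Ȟ = J*(H₀), and Ȟ is Hermitian. -/

open Matrix
open scoped Kronecker BigOperators

noncomputable section

abbrev Mat (n : ℕ) : Type := Matrix (Fin n) (Fin n) ℂ

/-- Partial trace over the second tensor factor. -/
def ptrG {a b : ℕ} (M : Matrix (Fin a × Fin b) (Fin a × Fin b) ℂ) :
    Matrix (Fin a) (Fin a) ℂ :=
  Matrix.of fun i j => ∑ g : Fin b, M (i, g) (j, g)

variable {K n m : ℕ} {dF dG : Fin K → ℕ}

/-- The reduction map `R : B(H) → Ǎ`, `R(X) = ⊕ₖ tr_{G,k}(Vₖ* X Vₖ)`. -/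
def Rmap (V : ∀ k : Fin K, Matrix (Fin n) (Fin (dF k) × Fin (dG k)) ℂ)
    (W : ∀ k : Fin K, Matrix (Fin m) (Fin (dF k)) ℂ) (X : Mat n) : Mat m :=
  ∑ k : Fin K, W k * ptrG ((V k)ᴴ * X * V k) * (W k)ᴴ

/-- The injection map `J : Ǎ → B(H)`, `J(ρ̌) = ⊕ₖ ρ̌ₖ ⊗ 1_{G,k}/dim H_{G,k}`. -/
def Jmap (V : ∀ k : Fin K, Matrix (Fin n) (Fin (dF k) × Fin (dG k)) ℂ)
    (W : ∀ k : Fin K, Matrix (Fin m) (Fin (dF k)) ℂ) (ρ : Mat m) : Mat n :=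
  ∑ k : Fin K, V k *
    (((W k)ᴴ * ρ * W k) ⊗ₖ (((dG k : ℂ))⁻¹ • (1 : Matrix (Fin (dG k)) (Fin (dG k)) ℂ))) *
    (V k)ᴴ

/-- The Hilbert–Schmidt adjoint of `J`, `J*(X) = ⊕ₖ tr_{G,k}(Vₖ* X Vₖ)/dim H_{G,k}`. -/
def Jstar (V : ∀ k : Fin K, Matrix (Fin n) (Fin (dF k) × Fin (dG k)) ℂ)
    (W : ∀ k : Fin K, Matrix (Fin m) (Fin (dF k)) ℂ) (X : Mat n) : Mat m :=
  ∑ k : Fin K, ((dG k : ℂ))⁻¹ • (W k * ptrG ((V k)ᴴ * X * V k) * (W k)ᴴ)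

/-- Membership in the reduced algebra `Ǎ = ⊕ₖ B(H_{F,k})`: block-diagonal matrices. -/
def IsBlockDiag (W : ∀ k : Fin K, Matrix (Fin m) (Fin (dF k)) ℂ) (ρ : Mat m) : Prop :=
  ρ = ∑ k : Fin K, (W k * (W k)ᴴ) * ρ * (W k * (W k)ᴴ)

/-! ### Auxiliary lemmas about the partial trace -/

lemma ptrG_conjTranspose {a b : ℕ} (M : Matrix (Fin a × Fin b) (Fin a × Fin b) ℂ) :
    (ptrG M)ᴴ = ptrG Mᴴ := by
  ext i j
  simp [ptrG, conjTranspose_apply, map_sum]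

lemma ptrG_sub {a b : ℕ} (M N : Matrix (Fin a × Fin b) (Fin a × Fin b) ℂ) :
    ptrG (M - N) = ptrG M - ptrG N := by
  ext i j
  simp [ptrG, Finset.sum_sub_distrib]

lemma ptrG_mul_kron {a b : ℕ} (M : Matrix (Fin a × Fin b) (Fin a × Fin b) ℂ)
    (A : Matrix (Fin a) (Fin a) ℂ) (c : ℂ) :
    ptrG (M * (A ⊗ₖ (c • (1 : Matrix (Fin b) (Fin b) ℂ)))) = c • (ptrG M * A) := by
  ext i j
  simp only [ptrG, Matrix.mul_apply, Matrix.of_apply, kroneckerMap_apply, Matrix.smul_apply,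
    one_apply, smul_eq_mul, Fintype.sum_prod_type, Matrix.smul_apply]
  simp only [mul_ite, mul_one, mul_zero, Finset.sum_ite_eq', Finset.mem_univ, if_true]
  rw [Finset.sum_comm, Finset.mul_sum]
  refine Finset.sum_congr rfl fun p _ => ?_
  rw [Finset.sum_mul, Finset.mul_sum]
  exact Finset.sum_congr rfl fun g _ => by ring

lemma kron_mul_ptrG {a b : ℕ} (M : Matrix (Fin a × Fin b) (Fin a × Fin b) ℂ)
    (A : Matrix (Fin a) (Fin a) ℂ) (c : ℂ) :
    ptrG ((A ⊗ₖ (c • (1 : Matrix (Fin b) (Fin b) ℂ))) * M) = c • (A * ptrG M) := by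
  ext i j
  simp only [ptrG, Matrix.mul_apply, Matrix.of_apply, kroneckerMap_apply, Matrix.smul_apply,
    one_apply, smul_eq_mul, Fintype.sum_prod_type, Matrix.smul_apply]
  simp only [mul_ite, mul_one, mul_zero, ite_mul, zero_mul, Finset.sum_ite_eq,
    Finset.sum_ite_eq', Finset.mem_univ, if_true]
  rw [Finset.sum_comm, Finset.mul_sum]
  refine Finset.sum_congr rfl fun p _ => ?_
  rw [Finset.mul_sum, Finset.mul_sum]
  exact Finset.sum_congr rfl fun g _ => by ring

theorem reduced_hamiltonian
    (V : ∀ k : Fin K, Matrix (Fin n) (Fin (dF k) × Fin (dG k)) ℂ)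
    (W : ∀ k : Fin K, Matrix (Fin m) (Fin (dF k)) ℂ)
    (hVortho : ∀ k, (V k)ᴴ * V k = 1)
    (hVdisj : ∀ j k, j ≠ k → (V j)ᴴ * V k = 0)
    (hVcomplete : ∑ k : Fin K, V k * (V k)ᴴ = 1)
    (hWortho : ∀ k, (W k)ᴴ * W k = 1)
    (hWdisj : ∀ j k, j ≠ k → (W j)ᴴ * W k = 0)
    (hWcomplete : ∑ k : Fin K, W k * (W k)ᴴ = 1)
    (hdG : ∀ k, 0 < dG k)
    (H₀ : Mat n) (hH : H₀ᴴ = H₀) :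
    (Jstar V W H₀)ᴴ = Jstar V W H₀ ∧
    ∀ ρ : Mat m, IsBlockDiag W ρ →
      Rmap V W (H₀ * Jmap V W ρ - Jmap V W ρ * H₀) =
        Jstar V W H₀ * ρ - ρ * Jstar V W H₀ := by
  -- the blocks of the reduced Hamiltonian are Hermitian
  have hHk : ∀ k, (ptrG ((V k)ᴴ * H₀ * V k))ᴴ = ptrG ((V k)ᴴ * H₀ * V k) := by
    intro k
    rw [ptrG_conjTranspose]
    congr 1
    simp [conjTranspose_mul, hH, Matrix.mul_assoc]
  constructor
  · -- Hermiticity of Ȟ = J*(H₀)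
    unfold Jstar
    rw [conjTranspose_sum]
    refine Finset.sum_congr rfl fun k _ => ?_
    rw [conjTranspose_smul]
    congr 1
    · simp
    rw [conjTranspose_mul, conjTranspose_mul, conjTranspose_conjTranspose, hHk k]
    simp only [Matrix.mul_assoc]
  · intro ρ hρ
    set A : ∀ k : Fin K, Matrix (Fin (dF k)) (Fin (dF k)) ℂ :=
      fun k => (W k)ᴴ * ρ * W k with hA
    set c : Fin K → ℂ := fun k => ((dG k : ℂ))⁻¹ with hc
    set Hk : ∀ k : Fin K, Matrix (Fin (dF k)) (Fin (dF k)) ℂ :=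
      fun k => ptrG ((V k)ᴴ * H₀ * V k) with hHkdef
    -- consequences of block-diagonality
    have hWρ : ∀ k, (W k)ᴴ * ρ = A k * (W k)ᴴ := by
      intro k
      conv_lhs => rw [hρ]
      rw [Matrix.mul_sum, Finset.sum_eq_single k]
      · simp only [hA, ← Matrix.mul_assoc, hWortho k, Matrix.one_mul]
      · intro j _ hjk
        simp only [← Matrix.mul_assoc, hWdisj k j (Ne.symm hjk), Matrix.zero_mul]
      · intro h; exact absurd (Finset.mem_univ k) h
    have hρW : ∀ k, ρ * W k = W k * A k := by
      intro k
      conv_lhs => rw [hρ]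
      rw [Matrix.sum_mul, Finset.sum_eq_single k]
      · simp only [hA, Matrix.mul_assoc, hWortho k, Matrix.mul_one]
      · intro j _ hjk
        simp only [Matrix.mul_assoc, hWdisj j k hjk, Matrix.mul_zero]
      · intro h; exact absurd (Finset.mem_univ k) h
    -- J(ρ) acts block-wise
    have hJV : ∀ k, Jmap V W ρ * V k
        = V k * ((A k) ⊗ₖ (c k • (1 : Matrix (Fin (dG k)) (Fin (dG k)) ℂ))) := by
      intro k
      unfold Jmap
      rw [Matrix.sum_mul, Finset.sum_eq_single k]
      · simp only [hA, hc, Matrix.mul_assoc, hVortho k, Matrix.mul_one]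
      · intro j _ hjk
        simp only [Matrix.mul_assoc, hVdisj j k hjk, Matrix.mul_zero]
      · intro h; exact absurd (Finset.mem_univ k) h
    have hVJ : ∀ k, (V k)ᴴ * Jmap V W ρ
        = ((A k) ⊗ₖ (c k • (1 : Matrix (Fin (dG k)) (Fin (dG k)) ℂ))) * (V k)ᴴ := by
      intro k
      unfold Jmap
      rw [Matrix.mul_sum, Finset.sum_eq_single k]
      · simp only [hA, hc, ← Matrix.mul_assoc, hVortho k, Matrix.one_mul]
      · intro j _ hjk
        simp only [← Matrix.mul_assoc, hVdisj k j (Ne.symm hjk), Matrix.zero_mul]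
      · intro h; exact absurd (Finset.mem_univ k) h
    calc Rmap V W (H₀ * Jmap V W ρ - Jmap V W ρ * H₀)
        = ∑ k : Fin K, (c k • (W k * (Hk k * A k) * (W k)ᴴ)
            - c k • (W k * (A k * Hk k) * (W k)ᴴ)) := by
          unfold Rmap
          refine Finset.sum_congr rfl fun k _ => ?_
          have e1 : (V k)ᴴ * (H₀ * Jmap V W ρ) * V k
              = ((V k)ᴴ * H₀ * V k) *
                ((A k) ⊗ₖ (c k • (1 : Matrix (Fin (dG k)) (Fin (dG k)) ℂ))) := by
            calc (V k)ᴴ * (H₀ * Jmap V W ρ) * V k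
                = (V k)ᴴ * H₀ * (Jmap V W ρ * V k) := by
                  simp only [Matrix.mul_assoc]
              _ = (V k)ᴴ * H₀ * (V k *
                    ((A k) ⊗ₖ (c k • (1 : Matrix (Fin (dG k)) (Fin (dG k)) ℂ)))) := by
                  rw [hJV k]
              _ = _ := by simp only [Matrix.mul_assoc]
          have e2 : (V k)ᴴ * (Jmap V W ρ * H₀) * V k
              = ((A k) ⊗ₖ (c k • (1 : Matrix (Fin (dG k)) (Fin (dG k)) ℂ))) *
                ((V k)ᴴ * H₀ * V k) := by
            calc (V k)ᴴ * (Jmap V W ρ * H₀) * V k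
                = ((V k)ᴴ * Jmap V W ρ) * (H₀ * V k) := by
                  simp only [Matrix.mul_assoc]
              _ = (((A k) ⊗ₖ (c k • (1 : Matrix (Fin (dG k)) (Fin (dG k)) ℂ))) * (V k)ᴴ) *
                    (H₀ * V k) := by rw [hVJ k]
              _ = _ := by simp only [Matrix.mul_assoc]
          rw [Matrix.mul_sub, Matrix.sub_mul, ptrG_sub, e1, e2,
            ptrG_mul_kron, kron_mul_ptrG]
          simp only [Matrix.mul_sub, Matrix.sub_mul, Matrix.mul_smul, Matrix.smul_mul,
            hHkdef]
      _ = Jstar V W H₀ * ρ - ρ * Jstar V W H₀ := by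
          unfold Jstar
          rw [Matrix.sum_mul, Matrix.mul_sum, ← Finset.sum_sub_distrib]
          refine Finset.sum_congr rfl fun k _ => ?_
          rw [smul_mul_assoc, mul_smul_comm]
          congr 1
          · congr 1
            simp only [Matrix.mul_assoc, hWρ k, hHkdef]
          · congr 1
            simp only [← Matrix.mul_assoc, hρW k, hHkdef]

end
end

section
/- With the notation of the Kraus-reduction construction, choose the orthonormal basis so that G^{(j,j)}_1 = 1_{H_{G,j}}/dim(H_{G,j})^{1/2} for each j. Then J*(C) is one of the reduced Kraus operators, namely J*(C) = Č_{1,0}. Moreover, if C belongs to the algebra A itself, then the set of reduced Kraus operators of C reduces to the single operator J*(C). -/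
/-! STATEMENT 7: choosing the basis with G^{(j,j)}_1 = 1/√dim(H_{G,j}), the adjoint J*(C)
is the reduced Kraus operator Č_{1,0}; and if C ∈ A then all other reduced Kraus operators
vanish, so the set of reduced Kraus operators reduces to {J*(C)}. -/

open Matrix
open scoped Kronecker BigOperators

noncomputable section

variable {K n m : ℕ} {dF dG : Fin K → ℕ}

/-- The reduced Kraus operators `Č_{ℓ,e}`. -/
def redKraus (dG : Fin K → ℕ) (W : ∀ k : Fin K, Matrix (Fin m) (Fin (dF k)) ℂ)
    {d : ℕ} (CF : ∀ j k : Fin K, Fin d → Matrix (Fin (dF j)) (Fin (dF k)) ℂ)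
    (ℓ : Fin d) (e : ℤ) : Mat m :=
  ∑ j : Fin K, ∑ k : Fin K,
    if ((k : ℤ) - (j : ℤ) = e) then
      ((Real.sqrt (dG k) : ℂ))⁻¹ • (W j * CF j k ℓ * (W k)ᴴ)
    else 0

lemma ptrG_sum {a b : ℕ} {ι : Type*} (s : Finset ι)
    (f : ι → Matrix (Fin a × Fin b) (Fin a × Fin b) ℂ) :
    ptrG (∑ x ∈ s, f x) = ∑ x ∈ s, ptrG (f x) := by
  ext i j
  simp only [ptrG, Matrix.of_apply, Finset.sum_apply, Matrix.sum_apply]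
  exact Finset.sum_comm

lemma ptrG_kron {a b : ℕ} (A : Matrix (Fin a) (Fin a) ℂ) (B : Matrix (Fin b) (Fin b) ℂ) :
    ptrG (A ⊗ₖ B) = B.trace • A := by
  ext i j
  simp only [ptrG, Matrix.of_apply, Matrix.kroneckerMap_apply, Matrix.smul_apply,
    Matrix.trace, Matrix.diag, smul_eq_mul, Finset.sum_mul]
  exact Finset.sum_congr rfl fun g _ => mul_comm _ _

/-- Extraction of the `G`-component against a fixed `G`-matrix. -/
def extr {a b c e : ℕ} (G : Matrix (Fin b) (Fin e) ℂ)
    (M : Matrix (Fin a × Fin b) (Fin c × Fin e) ℂ) : Matrix (Fin a) (Fin c) ℂ :=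
  Matrix.of fun i j => ∑ g : Fin b, ∑ g' : Fin e, star (G g g') * M (i, g) (j, g')

lemma extr_add {a b c e : ℕ} (G : Matrix (Fin b) (Fin e) ℂ)
    (M N : Matrix (Fin a × Fin b) (Fin c × Fin e) ℂ) :
    extr G (M + N) = extr G M + extr G N := by
  ext i j
  simp [extr, mul_add, Finset.sum_add_distrib]

lemma extr_sum {a b c e : ℕ} (G : Matrix (Fin b) (Fin e) ℂ) {ι : Type*} (s : Finset ι)
    (M : ι → Matrix (Fin a × Fin b) (Fin c × Fin e) ℂ) :
    extr G (∑ x ∈ s, M x) = ∑ x ∈ s, extr G (M x) := by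
  classical
  induction s using Finset.induction with
  | empty => simp [show extr G (0 : Matrix (Fin a × Fin b) (Fin c × Fin e) ℂ) = 0 from by
      ext i j; simp [extr]]
  | insert _ _ h ih =>
      rw [Finset.sum_insert h, Finset.sum_insert h, extr_add, ih]

lemma extr_zero {a b c e : ℕ} (G : Matrix (Fin b) (Fin e) ℂ) :
    extr G (0 : Matrix (Fin a × Fin b) (Fin c × Fin e) ℂ) = 0 := by
  ext i j
  simp [extr]

lemma extr_kron {a b c e : ℕ} (G : Matrix (Fin b) (Fin e) ℂ)
    (A : Matrix (Fin a) (Fin c) ℂ) (B : Matrix (Fin b) (Fin e) ℂ) :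
    extr G (A ⊗ₖ B) = (Gᴴ * B).trace • A := by
  ext i j
  simp only [extr, Matrix.of_apply, Matrix.kroneckerMap_apply, Matrix.smul_apply,
    Matrix.trace, Matrix.diag, Matrix.mul_apply, Matrix.conjTranspose_apply,
    smul_eq_mul, Finset.sum_mul]
  rw [Finset.sum_comm]
  refine Finset.sum_congr rfl fun g' _ => Finset.sum_congr rfl fun g _ => by ring

lemma sandwich {K n : ℕ} {dF dG : Fin K → ℕ}
    (V : ∀ k : Fin K, Matrix (Fin n) (Fin (dF k) × Fin (dG k)) ℂ)
    (hVortho : ∀ k, (V k)ᴴ * V k = 1)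
    (hVdisj : ∀ j k, j ≠ k → (V j)ᴴ * V k = 0)
    (X : ∀ j k : Fin K, Matrix (Fin (dF j) × Fin (dG j)) (Fin (dF k) × Fin (dG k)) ℂ)
    (q p : Fin K) :
    (V q)ᴴ * (∑ j : Fin K, ∑ k : Fin K, V j * X j k * (V k)ᴴ) * V p = X q p := by
  simp only [Matrix.mul_sum, Matrix.sum_mul]
  rw [Finset.sum_eq_single q]
  · rw [Finset.sum_eq_single p]
    · rw [show (V q)ᴴ * (V q * X q p * (V p)ᴴ) * V p
          = ((V q)ᴴ * V q) * X q p * ((V p)ᴴ * V p) by simp only [Matrix.mul_assoc],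
        hVortho, hVortho, Matrix.one_mul, Matrix.mul_one]
    · intro k _ hk
      rw [show (V q)ᴴ * (V q * X q k * (V k)ᴴ) * V p
          = ((V q)ᴴ * V q) * X q k * ((V k)ᴴ * V p) by simp only [Matrix.mul_assoc],
        hVdisj k p hk, Matrix.mul_zero]
    · intro h; exact absurd (Finset.mem_univ p) h
  · intro j _ hj
    refine Finset.sum_eq_zero fun k _ => ?_
    rw [show (V q)ᴴ * (V j * X j k * (V k)ᴴ) * V p
        = ((V q)ᴴ * V j) * (X j k * ((V k)ᴴ * V p)) by simp only [Matrix.mul_assoc],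
      hVdisj q j (Ne.symm hj), Matrix.zero_mul]
  · intro h; exact absurd (Finset.mem_univ q) h

lemma sandwich_diag_eq {K n : ℕ} {dF dG : Fin K → ℕ}
    (V : ∀ k : Fin K, Matrix (Fin n) (Fin (dF k) × Fin (dG k)) ℂ)
    (hVortho : ∀ k, (V k)ᴴ * V k = 1)
    (hVdisj : ∀ j k, j ≠ k → (V j)ᴴ * V k = 0)
    (X : ∀ k : Fin K, Matrix (Fin (dF k) × Fin (dG k)) (Fin (dF k) × Fin (dG k)) ℂ)
    (q : Fin K) :
    (V q)ᴴ * (∑ k : Fin K, V k * X k * (V k)ᴴ) * V q = X q := by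
  simp only [Matrix.mul_sum, Matrix.sum_mul]
  rw [Finset.sum_eq_single q]
  · rw [show (V q)ᴴ * (V q * X q * (V q)ᴴ) * V q
        = ((V q)ᴴ * V q) * X q * ((V q)ᴴ * V q) by simp only [Matrix.mul_assoc],
      hVortho, Matrix.one_mul, Matrix.mul_one]
  · intro k _ hk
    rw [show (V q)ᴴ * (V k * X k * (V k)ᴴ) * V q
        = ((V q)ᴴ * V k) * (X k * ((V k)ᴴ * V q)) by simp only [Matrix.mul_assoc],
      hVdisj q k (Ne.symm hk), Matrix.zero_mul]
  · intro h; exact absurd (Finset.mem_univ q) h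

lemma sandwich_diag_ne {K n : ℕ} {dF dG : Fin K → ℕ}
    (V : ∀ k : Fin K, Matrix (Fin n) (Fin (dF k) × Fin (dG k)) ℂ)
    (hVdisj : ∀ j k, j ≠ k → (V j)ᴴ * V k = 0)
    (X : ∀ k : Fin K, Matrix (Fin (dF k) × Fin (dG k)) (Fin (dF k) × Fin (dG k)) ℂ)
    (q p : Fin K) (hqp : q ≠ p) :
    (V q)ᴴ * (∑ k : Fin K, V k * X k * (V k)ᴴ) * V p = 0 := by
  simp only [Matrix.mul_sum, Matrix.sum_mul]
  refine Finset.sum_eq_zero fun k _ => ?_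
  by_cases hk : k = q
  · subst hk
    rw [show (V k)ᴴ * (V k * X k * (V k)ᴴ) * V p
        = ((V k)ᴴ * V k) * (X k * ((V k)ᴴ * V p)) by simp only [Matrix.mul_assoc],
      hVdisj k p hqp, Matrix.mul_zero, Matrix.mul_zero]
  · rw [show (V q)ᴴ * (V k * X k * (V k)ᴴ) * V p
        = ((V q)ᴴ * V k) * (X k * ((V k)ᴴ * V p)) by simp only [Matrix.mul_assoc],
      hVdisj q k (Ne.symm hk), Matrix.zero_mul]

theorem Jstar_is_a_reduced_Kraus_operator
    (V : ∀ k : Fin K, Matrix (Fin n) (Fin (dF k) × Fin (dG k)) ℂ)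
    (W : ∀ k : Fin K, Matrix (Fin m) (Fin (dF k)) ℂ)
    (hVortho : ∀ k, (V k)ᴴ * V k = 1)
    (hVdisj : ∀ j k, j ≠ k → (V j)ᴴ * V k = 0)
    (hVcomplete : ∑ k : Fin K, V k * (V k)ᴴ = 1)
    (hWortho : ∀ k, (W k)ᴴ * W k = 1)
    (hWdisj : ∀ j k, j ≠ k → (W j)ᴴ * W k = 0)
    (hWcomplete : ∑ k : Fin K, W k * (W k)ᴴ = 1)
    (hdG : ∀ k, 0 < dG k)
    {d : ℕ} (hd : 0 < d) (C : Mat n)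
    (CF : ∀ j k : Fin K, Fin d → Matrix (Fin (dF j)) (Fin (dF k)) ℂ)
    (GG : ∀ j k : Fin K, Fin d → Matrix (Fin (dG j)) (Fin (dG k)) ℂ)
    (hC : C = ∑ j : Fin K, ∑ k : Fin K, ∑ ℓ : Fin d,
      V j * ((CF j k ℓ) ⊗ₖ (GG j k ℓ)) * (V k)ᴴ)
    (hGorth : ∀ (j k : Fin K) (ℓ f : Fin d), ℓ ≠ f → ((GG j k ℓ)ᴴ * GG j k f).trace = 0)
    (hGnorm : ∀ (j k : Fin K) (ℓ : Fin d), GG j k ℓ ≠ 0 → ((GG j k ℓ)ᴴ * GG j k ℓ).trace = 1)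
    (hpad : ∀ (j k : Fin K) (ℓ : Fin d), GG j k ℓ = 0 → CF j k ℓ = 0)
    -- the first basis element on each diagonal block is the normalized identity
    (hfirst : ∀ j : Fin K, GG j j ⟨0, hd⟩ =
      ((Real.sqrt (dG j) : ℂ))⁻¹ • (1 : Matrix (Fin (dG j)) (Fin (dG j)) ℂ)) :
    -- J*(C) is the reduced Kraus operator Č_{1,0}
    Jstar V W C = redKraus dG W CF ⟨0, hd⟩ 0 ∧
    -- if C belongs to the algebra A itself, all the other reduced Kraus operators vanish
    ((∃ B : ∀ k : Fin K, Matrix (Fin (dF k)) (Fin (dF k)) ℂ,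
        C = ∑ k : Fin K, V k * ((B k) ⊗ₖ (1 : Matrix (Fin (dG k)) (Fin (dG k)) ℂ)) * (V k)ᴴ) →
      ∀ (ℓ : Fin d) (e : ℤ), ¬(ℓ = ⟨0, hd⟩ ∧ e = 0) → redKraus dG W CF ℓ e = 0) := by
  -- square-root facts
  have hsR : ∀ q : Fin K, Real.sqrt (dG q) ≠ 0 := fun q =>
    ne_of_gt (Real.sqrt_pos.mpr (by exact_mod_cast hdG q))
  have hs : ∀ q : Fin K, ((Real.sqrt (dG q) : ℂ)) ≠ 0 := fun q => by
    exact_mod_cast Complex.ofReal_ne_zero.mpr (hsR q)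
  -- traces of the diagonal G's
  have htr0 : ∀ (q : Fin K) (ℓ : Fin d), ℓ ≠ ⟨0, hd⟩ → (GG q q ℓ).trace = 0 := by
    intro q ℓ hℓ
    have h := hGorth q q ⟨0, hd⟩ ℓ (Ne.symm hℓ)
    rw [hfirst] at h
    simp only [Matrix.conjTranspose_smul, Matrix.conjTranspose_one, Matrix.smul_mul,
      one_mul, Matrix.trace_smul, smul_eq_mul, star_inv₀] at h
    rw [show star ((Real.sqrt (dG q) : ℂ)) = (Real.sqrt (dG q) : ℂ) from
      Complex.conj_ofReal _] at h
    rcases mul_eq_zero.mp h with h' | h'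
    · exact absurd h' (inv_ne_zero (hs q))
    · exact h'
  have htr1 : ∀ q : Fin K, (GG q q ⟨0, hd⟩).trace = (Real.sqrt (dG q) : ℂ) := by
    intro q
    rw [hfirst]
    rw [Matrix.trace_smul, Matrix.trace_one, smul_eq_mul, Fintype.card_fin]
    have : ((dG q : ℂ)) = (Real.sqrt (dG q) : ℂ) * (Real.sqrt (dG q) : ℂ) := by
      rw [← Complex.ofReal_mul, Real.mul_self_sqrt (by positivity)]
      norm_cast
    rw [this, inv_mul_cancel_left₀ (hs q)]
  -- blockwise decomposition of C
  have hA : ∀ q p : Fin K, (V q)ᴴ * C * V p = ∑ ℓ : Fin d, (CF q p ℓ) ⊗ₖ (GG q p ℓ) := by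
    intro q p
    have hC' : C = ∑ j : Fin K, ∑ k : Fin K,
        V j * (∑ ℓ : Fin d, (CF j k ℓ) ⊗ₖ (GG j k ℓ)) * (V k)ᴴ := by
      rw [hC]; simp only [Matrix.mul_sum, Matrix.sum_mul]
    rw [hC', sandwich V hVortho hVdisj _ q p]
  -- partial trace of the diagonal blocks
  have hpt : ∀ q : Fin K,
      ptrG ((V q)ᴴ * C * V q) = (Real.sqrt (dG q) : ℂ) • CF q q ⟨0, hd⟩ := by
    intro q
    rw [hA q q, ptrG_sum]
    rw [Finset.sum_eq_single (⟨0, hd⟩ : Fin d)]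
    · rw [ptrG_kron, htr1]
    · intro ℓ _ hℓ
      rw [ptrG_kron, htr0 q ℓ hℓ, zero_smul]
    · intro h; exact absurd (Finset.mem_univ _) h
  constructor
  · -- part 1
    have h2 : redKraus dG W CF ⟨0, hd⟩ 0
        = ∑ j : Fin K, ((Real.sqrt (dG j) : ℂ))⁻¹ • (W j * CF j j ⟨0, hd⟩ * (W j)ᴴ) := by
      unfold redKraus
      refine Finset.sum_congr rfl fun j _ => ?_
      rw [Finset.sum_eq_single j]
      · rw [if_pos (by omega)]
      · intro k _ hk
        rw [if_neg (fun h => hk (Fin.ext (by omega)))]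
      · intro h; exact absurd (Finset.mem_univ _) h
    rw [h2]
    unfold Jstar
    refine Finset.sum_congr rfl fun q _ => ?_
    rw [hpt q, Matrix.mul_smul, Matrix.smul_mul, smul_smul]
    congr 1
    have hdd : ((dG q : ℂ)) = (Real.sqrt (dG q) : ℂ) * (Real.sqrt (dG q) : ℂ) := by
      rw [← Complex.ofReal_mul, Real.mul_self_sqrt (by positivity)]
      norm_cast
    rw [hdd, mul_inv, mul_assoc, inv_mul_cancel₀ (hs q), mul_one]
  · -- part 2
    rintro ⟨B, hCB⟩ ℓ e hne
    have hdiag : ∀ q : Fin K,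
        (∑ f : Fin d, (CF q q f) ⊗ₖ (GG q q f)) = (B q) ⊗ₖ 1 := by
      intro q
      rw [← hA q q, hCB, sandwich_diag_eq V hVortho hVdisj]
    have hoff : ∀ q p : Fin K, q ≠ p →
        (∑ f : Fin d, (CF q p f) ⊗ₖ (GG q p f)) = 0 := by
      intro q p hqp
      rw [← hA q p, hCB, sandwich_diag_ne V hVdisj _ q p hqp]
    -- extraction computes CF
    have hextr : ∀ (q p : Fin K) (f : Fin d), GG q p f ≠ 0 →
        extr (GG q p f) (∑ f' : Fin d, (CF q p f') ⊗ₖ (GG q p f')) = CF q p f := by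
      intro q p f hGf
      rw [extr_sum]
      rw [Finset.sum_eq_single f]
      · rw [extr_kron, hGnorm q p f hGf, one_smul]
      · intro f' _ hf'
        rw [extr_kron, hGorth q p f f' (Ne.symm hf'), zero_smul]
      · intro h; exact absurd (Finset.mem_univ _) h
    have hCF0 : ∀ (q p : Fin K) (f : Fin d), (q ≠ p ∨ f ≠ ⟨0, hd⟩) → CF q p f = 0 := by
      intro q p f hqpf
      by_cases hGf : GG q p f = 0
      · exact hpad q p f hGf
      · rcases hqpf with hqp | hf
        · rw [← hextr q p f hGf, hoff q p hqp, extr_zero]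
        · rcases eq_or_ne q p with rfl | hqp
          · rw [← hextr q q f hGf, hdiag q, extr_kron, Matrix.mul_one,
              Matrix.trace_conjTranspose, htr0 q f hf, star_zero, zero_smul]
          · rw [← hextr q p f hGf, hoff q p hqp, extr_zero]
    -- conclude
    unfold redKraus
    refine Finset.sum_eq_zero fun j _ => Finset.sum_eq_zero fun k _ => ?_
    split_ifs with h
    · rcases eq_or_ne j k with rfl | hjk
      · have he : e = 0 := by omega
        have hℓ : ℓ ≠ ⟨0, hd⟩ := fun hl => hne ⟨hl, he⟩
        rw [hCF0 j j ℓ (Or.inr hℓ), Matrix.mul_zero, Matrix.zero_mul, smul_zero]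
      · rw [hCF0 j k ℓ (Or.inl hjk), Matrix.mul_zero, Matrix.zero_mul, smul_zero]
    · rfl

end
end

section
/- Let A = alg*({σ_z^{(j)}}_{j=1}^N ∪ {σ_x^{(j)}σ_x^{(j+1)}}_{j=1}^{N−1}) ⊆ B((ℂ²)^{⊗N}) be the unital *-algebra generated by the listed operators. Then A equals the commutant of Q = Π_{j=1}^N σ_z^{(j)}, i.e. A = {X : XQ = QX}, and under conjugation by the unitary U_N of the spin-chain construction, U_N A U_N* = B(ℂ^{2^{N−1}}) ⊕ B(ℂ^{2^{N−1}}) (block-diagonal operators with respect to the splitting of the first qubit factor induced by σ_z). -/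
/-! STATEMENT 12: the unital *-algebra generated by {σz^{(j)}} and {σx^{(j)}σx^{(j+1)}}
equals the commutant of the parity Q = Πⱼ σz^{(j)}, and conjugation by U_N maps it onto the
block-diagonal algebra B(ℂ^{2^{N-1}}) ⊕ B(ℂ^{2^{N-1}}) (the commutant of σz^{(1)}). -/

open Matrix
open scoped Kronecker BigOperators Matrix

noncomputable section

/-- Matrices acting on the N-qubit Hilbert space (ℂ²)^{⊗N}. -/
abbrev QMat (N : ℕ) : Type := Matrix (Fin N → Fin 2) (Fin N → Fin 2) ℂ

def pauliX : Matrix (Fin 2) (Fin 2) ℂ := !![0, 1; 1, 0]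
def pauliY : Matrix (Fin 2) (Fin 2) ℂ := !![0, -Complex.I; Complex.I, 0]
def pauliZ : Matrix (Fin 2) (Fin 2) ℂ := !![1, 0; 0, -1]

/-- The local operator `σ_q^{(j)} = 1 ⊗ ⋯ ⊗ A ⊗ ⋯ ⊗ 1` acting on the j-th qubit. -/
def localOp (N : ℕ) (j : Fin N) (A : Matrix (Fin 2) (Fin 2) ℂ) : QMat N :=
  Matrix.of fun v w =>
    ∏ i : Fin N, if i = j then A (v i) (w i) else (if v i = w i then (1 : ℂ) else 0)

/-- The two-qubit permutation matrix
`P = ½(1₄ + σx⊗1₂ + 1₂⊗σz − σx⊗σz)`, i.e. the matrix with rows e₁, e₄, e₃, e₂. -/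
def Pmat : Matrix (Fin 2 × Fin 2) (Fin 2 × Fin 2) ℂ :=
  (2⁻¹ : ℂ) • ((1 : Matrix (Fin 2 × Fin 2) (Fin 2 × Fin 2) ℂ)
    + pauliX ⊗ₖ (1 : Matrix (Fin 2) (Fin 2) ℂ)
    + (1 : Matrix (Fin 2) (Fin 2) ℂ) ⊗ₖ pauliZ
    - pauliX ⊗ₖ pauliZ)

/-- The recursively defined unitaries: `U₁ = 1₂`, `U_N = (P ⊗ 1)(1₂ ⊗ U_{N−1})`. -/
def Umat : (N : ℕ) → QMat N
  | 0 => 1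
  | 1 => 1
  | (N + 2) =>
      (Matrix.of fun v w =>
        Pmat (v 0, v 1) (w 0, w 1) *
          ∏ i : Fin (N + 2), if 2 ≤ (i : ℕ) then (if v i = w i then (1 : ℂ) else 0) else 1) *
      (Matrix.of fun v w =>
        (if v 0 = w 0 then (1 : ℂ) else 0) *
          Umat (N + 1) (fun i => v i.succ) (fun i => w i.succ))

/-- The global parity operator `Q = σz^{(1)} ⋯ σz^{(N)}`. -/
def parityQ (N : ℕ) : QMat N :=
  ((List.finRange N).map fun j => localOp N j pauliZ).prod

/-- The generators `{σz^{(j)}}ⱼ ∪ {σx^{(j)}σx^{(j+1)}}ⱼ`. -/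
def genSet (N : ℕ) : Set (QMat N) :=
  (Set.range fun j : Fin N => localOp N j pauliZ) ∪
    {X | ∃ (j : Fin N) (h : (j : ℕ) + 1 < N),
      X = localOp N j pauliX * localOp N ⟨(j : ℕ) + 1, h⟩ pauliX}

def chi : Fin 2 → ℂ := fun a => if a = 0 then 1 else -1

lemma chi_add (a b : Fin 2) : chi (a + b) = chi a * chi b := by
  fin_cases a <;> fin_cases b <;> simp [chi] <;> norm_num

lemma chi_zero : chi 0 = 1 := rfl

lemma chi_sq (a : Fin 2) : chi a * chi a = 1 := by
  fin_cases a <;> simp [chi]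

lemma fin2_two_torsion : ∀ a b : Fin 2, a + b + b = a := by decide

lemma fin2_eq_add_one {a b : Fin 2} (h : a ≠ b) : a = b + 1 := by revert h; revert a b; decide

lemma pauliZ_apply (a b : Fin 2) : pauliZ a b = if a = b then chi a else 0 := by
  fin_cases a <;> fin_cases b <;> simp [pauliZ, chi]

lemma pauliX_apply (a b : Fin 2) : pauliX a b = if a = b + 1 then 1 else 0 := by
  fin_cases a <;> fin_cases b <;> simp [pauliX] <;> decide

lemma chi_sum {ι : Type*} (s : Finset ι) (f : ι → Fin 2) :
    chi (∑ i ∈ s, f i) = ∏ i ∈ s, chi (f i) := by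
  classical
  induction s using Finset.induction with
  | empty => simp [chi]
  | insert _ _ h ih => rw [Finset.sum_insert h, Finset.prod_insert h, chi_add, ih]

lemma Pmat_apply (a b c d : Fin 2) :
    Pmat (a, b) (c, d) = if a = c + b ∧ b = d then 1 else 0 := by
  fin_cases a <;> fin_cases b <;> fin_cases c <;> fin_cases d <;>
    simp [Pmat, pauliX, pauliZ, Matrix.one_apply, Prod.ext_iff] <;> norm_num

lemma localOp_pauliZ (N : ℕ) (j : Fin N) :
    localOp N j pauliZ = Matrix.diagonal (fun v => chi (v j)) := by
  ext v w
  simp only [localOp, Matrix.of_apply, Matrix.diagonal_apply]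
  by_cases h : v = w
  · subst h
    simp only [if_pos rfl, pauliZ_apply]
    rw [Finset.prod_eq_single j (by intro i _ hij; simp [hij]) (by simp)]
    simp
  · rw [if_neg h]
    obtain ⟨i, hi⟩ : ∃ i, v i ≠ w i := by
      by_contra hc; push_neg at hc; exact h (funext hc)
    refine Finset.prod_eq_zero (Finset.mem_univ i) ?_
    by_cases hij : i = j
    · simp [hij, pauliZ_apply, hij ▸ hi]
    · simp [hij, hi]

def eF (N : ℕ) (j : Fin N) : Fin N → Fin 2 := fun i => if i = j then 1 else 0

def flipM (N : ℕ) (s : Fin N → Fin 2) : QMat N :=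
  Matrix.of fun v w => if v = w + s then 1 else 0

lemma localOp_pauliX (N : ℕ) (j : Fin N) : localOp N j pauliX = flipM N (eF N j) := by
  ext v w
  simp only [localOp, Matrix.of_apply, flipM]
  have : ∀ i : Fin N,
      (if i = j then pauliX (v i) (w i) else (if v i = w i then (1:ℂ) else 0))
        = if v i = w i + eF N j i then 1 else 0 := by
    intro i
    by_cases hij : i = j
    · simp [hij, pauliX_apply, eF]
    · simp [hij, eF]
  rw [Finset.prod_congr rfl (fun i _ => this i), Fintype.prod_boole]
  congr 1
  simp [funext_iff]

lemma flipM_mul (N : ℕ) (s t : Fin N → Fin 2) :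
    flipM N s * flipM N t = flipM N (s + t) := by
  ext v w
  rw [Matrix.mul_apply]
  have hterm : ∀ u, (flipM N s) v u * (flipM N t) u w
      = if u = w + t then (if v = w + (s + t) then (1:ℂ) else 0) else 0 := by
    intro u
    simp only [flipM, Matrix.of_apply]
    by_cases hu : u = w + t
    · subst hu
      rw [if_pos rfl, mul_one, if_pos rfl]
      have : w + t + s = w + (s + t) := by rw [add_assoc, add_comm t s]
      rw [this]
    · rw [if_neg hu, mul_zero, if_neg hu]
  rw [Finset.sum_congr rfl (fun u _ => hterm u), Finset.sum_ite_eq' Finset.univ (w + t)]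
  simp [flipM]

lemma flipM_zero (N : ℕ) : flipM N (0 : Fin N → Fin 2) = 1 := by
  ext v w
  simp [flipM, Matrix.one_apply]

lemma flipM_mul_diagonal (N : ℕ) (s : Fin N → Fin 2) (q : (Fin N → Fin 2) → ℂ)
    (hq : ∀ w, q (w + s) = q w) :
    flipM N s * Matrix.diagonal q = Matrix.diagonal q * flipM N s := by
  ext v w
  rw [Matrix.mul_diagonal, Matrix.diagonal_mul]
  simp only [flipM, Matrix.of_apply]
  by_cases h : v = w + s
  · rw [if_pos h, h, hq, one_mul, mul_one]
  · rw [if_neg h, zero_mul, mul_zero]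

def qfun (N : ℕ) (v : Fin N → Fin 2) : ℂ := ∏ j, chi (v j)

lemma parityQ_eq (N : ℕ) : parityQ N = Matrix.diagonal (qfun N) := by
  rw [parityQ]
  have h1 : (fun j : Fin N => localOp N j pauliZ)
      = fun j => Matrix.diagonalRingHom (Fin N → Fin 2) ℂ (fun v => chi (v j)) := by
    funext j; exact localOp_pauliZ N j
  rw [h1]
  rw [show (fun j : Fin N => Matrix.diagonalRingHom (Fin N → Fin 2) ℂ (fun v => chi (v j)))
      = (Matrix.diagonalRingHom (Fin N → Fin 2) ℂ) ∘ (fun j v => chi (v j)) from rfl]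
  rw [← List.map_map, ← map_list_prod]
  show Matrix.diagonal _ = _
  refine congrArg Matrix.diagonal (funext fun v => ?_)
  rw [← Fin.prod_univ_def, Finset.prod_apply]
  rfl

lemma qfun_add (N : ℕ) (v s : Fin N → Fin 2) : qfun N (v + s) = qfun N v * qfun N s := by
  unfold qfun
  rw [← Finset.prod_mul_distrib]
  exact Finset.prod_congr rfl fun i _ => by rw [Pi.add_apply, chi_add]

lemma qfun_eF_pair (N : ℕ) (a b : Fin N) (hab : a ≠ b) :
    qfun N (eF N a + eF N b) = 1 := by
  rw [qfun_add]
  unfold qfun eF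
  have h1 : ∀ c : Fin N, ∏ j : Fin N, chi (if j = c then 1 else 0) = -1 := by
    intro c
    have : ∀ j : Fin N, chi (if j = c then 1 else 0) = if j = c then (-1:ℂ) else 1 := by
      intro j; by_cases h : j = c <;> simp [h, chi]
    rw [Finset.prod_congr rfl (fun j _ => this j), Finset.prod_ite_eq' Finset.univ c fun _ => (-1:ℂ)]
    simp
  rw [h1, h1]; norm_num

lemma qfun_sq (N : ℕ) (v : Fin N → Fin 2) : qfun N v * qfun N v = 1 := by
  unfold qfun
  rw [← Finset.prod_mul_distrib]
  rw [Finset.prod_congr rfl fun i _ => chi_sq (v i)]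
  simp

lemma star_qfun (N : ℕ) (v : Fin N → Fin 2) : star (qfun N v) = qfun N v := by
  unfold qfun
  rw [star_prod]
  refine Finset.prod_congr rfl fun i _ => ?_
  rcases (by decide : ∀ a : Fin 2, a = 0 ∨ a = 1) (v i) with h | h <;> simp [h, chi]

lemma qfun_mul_eq_pow (N : ℕ) (v w : Fin N → Fin 2) :
    qfun N v * qfun N w
      = (-1 : ℂ) ^ (Finset.univ.filter fun i => v i ≠ w i).card := by
  unfold qfun
  rw [← Finset.prod_mul_distrib]
  have : ∀ i : Fin N, chi (v i) * chi (w i) = if v i ≠ w i then (-1:ℂ) else 1 := by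
    intro i
    rcases (by decide : ∀ a : Fin 2, a = 0 ∨ a = 1) (v i) with h | h <;>
      rcases (by decide : ∀ a : Fin 2, a = 0 ∨ a = 1) (w i) with h' | h' <;>
        simp [h, h', chi]
  rw [Finset.prod_congr rfl fun i _ => this i, Finset.prod_ite, Finset.prod_const,
    Finset.prod_const]
  simp

lemma proj_mem (N : ℕ) (v : Fin N → Fin 2) :
    Matrix.diagonal (fun w => if w = v then (1:ℂ) else 0)
      ∈ StarAlgebra.adjoin ℂ (genSet N) := by
  have hfac : ∀ j : Fin N,
      ((2⁻¹ : ℂ) • ((1 : QMat N) + chi (v j) • localOp N j pauliZ))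
        = Matrix.diagonal (fun w => if w j = v j then (1:ℂ) else 0) := by
    intro j
    rw [localOp_pauliZ]
    ext a b
    by_cases hab : a = b
    · subst hab
      simp only [Matrix.smul_apply, Matrix.add_apply, Matrix.one_apply_eq,
        Matrix.diagonal_apply_eq, smul_eq_mul]
      rcases (by decide : ∀ x : Fin 2, x = 0 ∨ x = 1) (v j) with h | h <;>
        rcases (by decide : ∀ x : Fin 2, x = 0 ∨ x = 1) (a j) with h' | h' <;>
          rw [h, h'] <;> simp [chi] <;> norm_num
    · simp [Matrix.diagonal_apply_ne _ hab, Matrix.one_apply_ne hab, hab]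
  have hfacmem : ∀ j : Fin N,
      Matrix.diagonal (fun w => if w j = v j then (1:ℂ) else 0)
        ∈ StarAlgebra.adjoin ℂ (genSet N) := by
    intro j
    rw [← hfac]
    exact SMulMemClass.smul_mem _ (add_mem (one_mem _)
      (SMulMemClass.smul_mem _ (StarAlgebra.subset_adjoin ℂ _ (Or.inl ⟨j, rfl⟩))))
  have key : ∀ s : Finset (Fin N),
      Matrix.diagonal (fun w => if ∀ j ∈ s, w j = v j then (1:ℂ) else 0)
        ∈ StarAlgebra.adjoin ℂ (genSet N) := by
    intro s
    induction s using Finset.induction with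
    | empty =>
      have : (fun w : Fin N → Fin 2 => if ∀ j ∈ (∅ : Finset (Fin N)), w j = v j
          then (1:ℂ) else 0) = fun _ => 1 := by
        funext w; simp
      rw [this, Matrix.diagonal_one]
      exact one_mem _
    | @insert j s hj ih =>
      have : (fun w : Fin N → Fin 2 => if ∀ k ∈ insert j s, w k = v k then (1:ℂ) else 0)
          = fun w => (if w j = v j then (1:ℂ) else 0)
              * (if ∀ k ∈ s, w k = v k then (1:ℂ) else 0) := by
        funext w
        by_cases h1 : w j = v j <;> by_cases h2 : ∀ k ∈ s, w k = v k <;>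
          simp [Finset.forall_mem_insert, h1, h2]
      rw [show Matrix.diagonal (fun w : Fin N → Fin 2 =>
            if ∀ k ∈ insert j s, w k = v k then (1:ℂ) else 0)
          = Matrix.diagonal (fun w => if w j = v j then (1:ℂ) else 0)
            * Matrix.diagonal (fun w => if ∀ k ∈ s, w k = v k then (1:ℂ) else 0) by
        rw [Matrix.diagonal_mul_diagonal]; exact congrArg _ this]
      exact mul_mem (hfacmem j) ih
  have := key Finset.univ
  have heq : (fun w : Fin N → Fin 2 => if ∀ j ∈ Finset.univ, w j = v j then (1:ℂ) else 0)
      = fun w => if w = v then (1:ℂ) else 0 := by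
    funext w; simp [funext_iff]
  rwa [heq] at this

lemma flip_pair_mem (N : ℕ) : ∀ (n : ℕ) (a b : Fin N), (b : ℕ) = (a : ℕ) + n →
    flipM N (eF N a + eF N b) ∈ StarAlgebra.adjoin ℂ (genSet N) := by
  intro n
  induction n with
  | zero =>
    intro a b hab
    have : a = b := Fin.ext (by omega)
    subst this
    have : eF N a + eF N a = 0 := by
      funext i; exact (by decide : ∀ x : Fin 2, x + x = 0) _
    rw [this, flipM_zero]
    exact one_mem _
  | succ n ih =>
    intro a b hab
    have hc : (a : ℕ) + 1 < N := by omega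
    set c : Fin N := ⟨(a : ℕ) + 1, hc⟩ with hcdef
    have hsplit : eF N a + eF N b = (eF N a + eF N c) + (eF N c + eF N b) := by
      funext i
      simp only [Pi.add_apply]
      exact ((by decide : ∀ p q r : Fin 2, p + r = (p + q) + (q + r)) _ _ _)
    rw [hsplit, ← flipM_mul]
    refine mul_mem ?_ (ih c b (by simp [hcdef]; omega))
    rw [← flipM_mul, ← localOp_pauliX, ← localOp_pauliX]
    exact StarAlgebra.subset_adjoin ℂ _ (Or.inr ⟨a, hc, rfl⟩)

lemma std_diag (N : ℕ) (v : Fin N → Fin 2) :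
    Matrix.single v v (1:ℂ)
      = Matrix.diagonal (fun w => if w = v then (1:ℂ) else 0) := by
  ext a b
  rw [Matrix.diagonal_apply]
  show (if v = a ∧ v = b then (1:ℂ) else 0) = _
  by_cases h1 : v = a <;> by_cases h2 : a = b <;> simp_all [eq_comm]

lemma sandwich_s12 (N : ℕ) (M : QMat N) (v w : Fin N → Fin 2) :
    Matrix.single v v (1:ℂ) * M * Matrix.single w w 1
      = Matrix.single v w (M v w) := by
  ext a b
  by_cases hbw : b = w
  · subst hbw
    rw [Matrix.mul_single_apply_same]
    by_cases hav : a = v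
    · subst hav
      rw [Matrix.single_mul_apply_same]
      simp [Matrix.single]
    · rw [Matrix.single_mul_apply_of_ne _ _ _ _ _ hav]
      have hva : v ≠ a := fun h => hav h.symm
      simp [Matrix.single, hva]
  · rw [Matrix.mul_single_apply_of_ne _ _ _ _ _ hbw]
    have hwb : w ≠ b := fun h => hbw h.symm
    simp [Matrix.single, hwb]

lemma flip_pair_mem' (N : ℕ) (a b : Fin N) :
    flipM N (eF N a + eF N b) ∈ StarAlgebra.adjoin ℂ (genSet N) := by
  rcases Nat.le_total (a:ℕ) (b:ℕ) with h | h
  · exact flip_pair_mem N ((b:ℕ) - (a:ℕ)) a b (by omega)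
  · rw [add_comm]
    exact flip_pair_mem N ((a:ℕ) - (b:ℕ)) b a (by omega)

lemma std_mem (N : ℕ) : ∀ (d : ℕ) (v w : Fin N → Fin 2), Even d →
    (Finset.univ.filter fun i => v i ≠ w i).card = d →
    Matrix.single v w (1:ℂ) ∈ StarAlgebra.adjoin ℂ (genSet N) := by
  intro d
  induction d using Nat.strong_induction_on with
  | _ d ih =>
    intro v w hev hcard
    rcases Nat.eq_zero_or_pos d with hd0 | hdpos
    · subst hd0
      have hvw : v = w := by
        funext i
        by_contra hne
        have hmem : i ∈ Finset.univ.filter fun i => v i ≠ w i := by simp [hne]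
        rw [Finset.card_eq_zero] at hcard
        simp [hcard] at hmem
      subst hvw
      rw [std_diag]
      exact proj_mem N v
    · have hd2 : 2 ≤ d := by rcases hev with ⟨k, hk⟩; omega
      have h1lt : 1 < (Finset.univ.filter fun i => v i ≠ w i).card := by omega
      obtain ⟨a, ha, b, hb, hab⟩ := Finset.one_lt_card.mp h1lt
      rw [Finset.mem_filter] at ha hb
      have hva : v a ≠ w a := ha.2
      have hvb : v b ≠ w b := hb.2
      set v' : Fin N → Fin 2 := fun i => if i = a ∨ i = b then w i else v i with hv'
      have hshift : v = v' + (eF N a + eF N b) := by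
        funext i
        simp only [Pi.add_apply, hv', eF]
        by_cases hia : i = a
        · subst hia
          rw [if_pos (Or.inl rfl), if_pos rfl, if_neg hab]
          rw [(by decide : (1 : Fin 2) + 0 = 1)]
          exact fin2_eq_add_one hva
        · by_cases hib : i = b
          · subst hib
            rw [if_pos (Or.inr rfl), if_neg (fun h => hab h.symm), if_pos rfl]
            rw [(by decide : (0 : Fin 2) + 1 = 1)]
            exact fin2_eq_add_one hvb
          · rw [if_neg (by tauto), if_neg hia, if_neg hib]
            exact ((by decide : ∀ x : Fin 2, x + (0 + 0) = x) _).symm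
      have hpiece1 : Matrix.single v v' (1:ℂ) ∈ StarAlgebra.adjoin ℂ (genSet N) := by
        have hval : flipM N (eF N a + eF N b) v v' = 1 := by
          simp only [flipM, Matrix.of_apply]
          rw [if_pos hshift]
        have hsw := sandwich_s12 N (flipM N (eF N a + eF N b)) v v'
        rw [hval] at hsw
        rw [← hsw, std_diag N v, std_diag N v']
        exact mul_mem (mul_mem (proj_mem N v) (flip_pair_mem' N a b)) (proj_mem N v')
      have hset : (Finset.univ.filter fun i => v' i ≠ w i)
          = ((Finset.univ.filter fun i => v i ≠ w i).erase a).erase b := by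
        ext i
        simp only [Finset.mem_filter, Finset.mem_univ, true_and, Finset.mem_erase, hv']
        by_cases hia : i = a
        · subst hia
          rw [if_pos (Or.inl rfl)]
          simp [hab]
        · by_cases hib : i = b
          · subst hib
            rw [if_pos (Or.inr rfl)]
            simp
          · rw [if_neg (by tauto)]
            simp [hia, hib]
      have hbmem : b ∈ (Finset.univ.filter fun i => v i ≠ w i).erase a :=
        Finset.mem_erase.mpr ⟨fun h => hab h.symm, Finset.mem_filter.mpr ⟨Finset.mem_univ b, hvb⟩⟩
      have hamem : a ∈ (Finset.univ.filter fun i => v i ≠ w i) :=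
        Finset.mem_filter.mpr ⟨Finset.mem_univ a, hva⟩
      have hcard' : (Finset.univ.filter fun i => v' i ≠ w i).card = d - 2 := by
        rw [hset, Finset.card_erase_of_mem hbmem, Finset.card_erase_of_mem hamem, hcard]
        omega
      have hpiece2 : Matrix.single v' w (1:ℂ) ∈ StarAlgebra.adjoin ℂ (genSet N) := by
        refine ih (d - 2) (by omega) v' w ?_ hcard'
        rcases hev with ⟨k, hk⟩
        exact ⟨k - 1, by omega⟩
      have hmul : Matrix.single v v' (1:ℂ) * Matrix.single v' w 1
          = Matrix.single v w 1 := by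
        rw [Matrix.single_mul_single_same, one_mul]
      rw [← hmul]
      exact mul_mem hpiece1 hpiece2

lemma part1 (N : ℕ) :
    ((StarAlgebra.adjoin ℂ (genSet N) : StarSubalgebra ℂ (QMat N)) : Set (QMat N)) =
      {X : QMat N | X * parityQ N = parityQ N * X} := by
  ext X
  simp only [SetLike.mem_coe, Set.mem_setOf_eq]
  constructor
  · intro hX
    induction hX using StarAlgebra.adjoin_induction with
    | mem x hx =>
      rcases hx with ⟨j, rfl⟩ | ⟨j, h, rfl⟩
      · show localOp N j pauliZ * parityQ N = parityQ N * localOp N j pauliZ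
        rw [localOp_pauliZ, parityQ_eq, Matrix.diagonal_mul_diagonal,
          Matrix.diagonal_mul_diagonal]
        exact congrArg Matrix.diagonal (funext fun i => mul_comm _ _)
      · rw [localOp_pauliX, localOp_pauliX, flipM_mul, parityQ_eq]
        refine flipM_mul_diagonal N _ _ fun w => ?_
        rw [qfun_add, qfun_eF_pair N _ _ (Fin.ne_of_val_ne (by simp)), mul_one]
    | algebraMap r => exact Algebra.commutes r _
    | add x y hx hy ihx ihy => rw [add_mul, mul_add, ihx, ihy]
    | mul x y hx hy ihx ihy => rw [mul_assoc, ihy, ← mul_assoc, ihx, mul_assoc]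
    | star x hx ihx =>
      have hQ : star (parityQ N) = parityQ N := by
        rw [parityQ_eq, Matrix.star_eq_conjTranspose, Matrix.diagonal_conjTranspose]
        refine congrArg Matrix.diagonal (funext fun v => ?_)
        exact star_qfun N v
      calc star x * parityQ N = star x * star (parityQ N) := by rw [hQ]
        _ = star (parityQ N * x) := (StarMul.star_mul _ _).symm
        _ = star (x * parityQ N) := by rw [← ihx]
        _ = star (parityQ N) * star x := StarMul.star_mul _ _
        _ = parityQ N * star x := by rw [hQ]
  · intro hX
    rw [parityQ_eq] at hX
    have hzero : ∀ v w, qfun N v ≠ qfun N w → X v w = 0 := by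
      intro v w hq
      have hentry := congrArg (fun M : QMat N => M v w) hX
      simp only [Matrix.mul_diagonal, Matrix.diagonal_mul] at hentry
      by_contra hX0
      have h2 : X v w * qfun N w = X v w * qfun N v := by rw [hentry, mul_comm]
      exact hq (mul_left_cancel₀ hX0 h2).symm
    rw [Matrix.matrix_eq_sum_single X]
    refine sum_mem fun v _ => sum_mem fun w _ => ?_
    by_cases hq : qfun N v = qfun N w
    · have heven : Even ((Finset.univ.filter fun i => v i ≠ w i).card) := by
        have h1 := qfun_mul_eq_pow N v w
        rw [hq, qfun_sq] at h1
        exact (neg_one_pow_eq_one_iff_even (by norm_num : (-1:ℂ) ≠ 1)).mp h1.symm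
      have hstd := std_mem N _ v w heven rfl
      have hsmul : Matrix.single v w (X v w)
          = X v w • Matrix.single v w (1:ℂ) := by
        rw [Matrix.smul_single, smul_eq_mul, mul_one]
      rw [hsmul]
      exact SMulMemClass.smul_mem _ hstd
    · rw [hzero v w hq, Matrix.single_zero]
      exact zero_mem _

def permF (N : ℕ) (w : Fin N → Fin 2) : Fin N → Fin 2 :=
  fun j => ∑ i ∈ Finset.univ.filter (fun i => j ≤ i), w i

lemma permF_succ (N : ℕ) (w : Fin (N+2) → Fin 2) (j : Fin (N+1)) :
    permF (N+2) w j.succ = permF (N+1) (fun i => w i.succ) j := by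
  unfold permF
  rw [Finset.sum_filter, Finset.sum_filter, Fin.sum_univ_succ]
  have h0 : ¬ (j.succ ≤ (0 : Fin (N+2))) := by
    rw [Fin.le_def]
    simp only [Fin.val_succ, Fin.val_zero]
    omega
  rw [if_neg h0, zero_add]
  refine Finset.sum_congr rfl fun i _ => ?_
  have hiff : j.succ ≤ i.succ ↔ j ≤ i := Fin.succ_le_succ_iff
  simp [hiff]

lemma permF_zero (N : ℕ) (w : Fin (N+2) → Fin 2) :
    permF (N+2) w 0 = w 0 + permF (N+1) (fun i => w i.succ) 0 := by
  unfold permF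
  rw [Finset.sum_filter, Finset.sum_filter, Fin.sum_univ_succ]
  rw [if_pos (Fin.zero_le _)]
  congr 1

lemma Umat_apply : ∀ (N : ℕ) (v w : Fin N → Fin 2),
    Umat N v w = if v = permF N w then 1 else 0 := by
  intro N
  induction N using Nat.strong_induction_on with
  | _ N ih =>
    match N with
    | 0 =>
      intro v w
      have hv : v = permF 0 w := funext fun j => j.elim0
      have hvw : v = w := funext fun j => j.elim0
      rw [if_pos hv]
      simp only [Umat]
      rw [hvw, Matrix.one_apply_eq]
    | 1 =>
      intro v w
      have hperm : permF 1 w = w := by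
        funext j
        unfold permF
        rw [Finset.sum_filter, Fin.sum_univ_one, Fin.eq_zero j, if_pos (le_refl _)]
      simp only [Umat]
      rw [Matrix.one_apply, hperm]
    | (N + 2) =>
      intro v w
      have ihN : ∀ v w, Umat (N+1) v w = if v = permF (N+1) w then 1 else 0 :=
        ih (N+1) (by omega)
      have h10 : (1 : Fin (N+2)) ≠ 0 := Fin.ne_of_val_ne (by simp)
      have hcases : ∀ i : Fin (N+2), i = 0 ∨ i = 1 ∨ 2 ≤ (i : ℕ) := by
        intro i
        have h : (i:ℕ) = 0 ∨ (i:ℕ) = 1 ∨ 2 ≤ (i:ℕ) := by omega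
        rcases h with h | h | h
        · exact Or.inl (Fin.ext (by simp [h]))
        · exact Or.inr (Or.inl (Fin.ext (by simp [h])))
        · exact Or.inr (Or.inr h)
      have hA : ∀ u : Fin (N+2) → Fin 2,
          (Pmat (v 0, v 1) (u 0, u 1) *
            ∏ i : Fin (N+2), if 2 ≤ (i:ℕ) then (if v i = u i then (1:ℂ) else 0) else 1)
          = if (v 0 = u 0 + v 1 ∧ v 1 = u 1) ∧ ∀ i : Fin (N+2), 2 ≤ (i:ℕ) → v i = u i
            then 1 else 0 := by
        intro u
        rw [Pmat_apply]
        have hfac : ∀ i : Fin (N+2),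
            (if 2 ≤ (i:ℕ) then (if v i = u i then (1:ℂ) else 0) else 1)
              = if (2 ≤ (i:ℕ) → v i = u i) then 1 else 0 := by
          intro i
          by_cases h2 : 2 ≤ (i:ℕ)
          · by_cases hvu : v i = u i <;> simp [h2, hvu]
          · simp [h2]
        rw [Finset.prod_congr rfl fun i _ => hfac i, Fintype.prod_boole]
        by_cases h1 : (v 0 = u 0 + v 1 ∧ v 1 = u 1) <;>
          by_cases h2 : ∀ i : Fin (N+2), 2 ≤ (i:ℕ) → v i = u i <;> simp [h1, h2]
      set u₀ : Fin (N+2) → Fin 2 := Function.update v 0 (v 0 + v 1) with hu₀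
      have hu₀0 : u₀ 0 = v 0 + v 1 := Function.update_self _ _ _
      have hu₀1 : u₀ 1 = v 1 := Function.update_of_ne h10 _ _
      have hu₀i : ∀ i : Fin (N+2), i ≠ 0 → u₀ i = v i :=
        fun i hi => Function.update_of_ne hi _ _
      simp only [Umat]
      rw [Matrix.mul_apply]
      rw [Finset.sum_eq_single u₀]
      · simp only [Matrix.of_apply]
        rw [hA u₀]
        rw [if_pos ⟨⟨by rw [hu₀0]; exact (fin2_two_torsion _ _).symm, hu₀1.symm⟩,
          fun i hi => (hu₀i i (fun h0 => by rw [h0] at hi; simp at hi)).symm⟩, one_mul]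
        rw [hu₀0]
        have htail : (fun i : Fin (N+1) => u₀ i.succ) = fun i => v i.succ := by
          funext i; exact hu₀i _ (Fin.succ_ne_zero i)
        rw [htail, ihN]
        have hiff : ((v 0 + v 1 = w 0) ∧ (fun i : Fin (N+1) => v i.succ)
              = permF (N+1) (fun i => w i.succ)) ↔ v = permF (N+2) w := by
          constructor
          · rintro ⟨h0, hs⟩
            funext j
            refine Fin.cases ?_ (fun i => ?_) j
            · rw [permF_zero]
              have h1 : v 1 = permF (N+1) (fun i => w i.succ) 0 := by
                have := congrFun hs 0
                rwa [Fin.succ_zero_eq_one] at this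
              rw [← h0, ← h1]
              exact (fin2_two_torsion _ _).symm
            · rw [permF_succ]
              exact congrFun hs i
          · intro h
            subst h
            constructor
            · rw [permF_zero]
              have h1 : permF (N+2) w 1 = permF (N+1) (fun i => w i.succ) 0 := by
                rw [← Fin.succ_zero_eq_one, permF_succ]
              rw [h1]
              exact fin2_two_torsion _ _
            · funext i
              rw [permF_succ]
        by_cases hc1 : v 0 + v 1 = w 0 <;>
          by_cases hc2 : (fun i : Fin (N+1) => v i.succ) = permF (N+1) (fun i => w i.succ)
        · rw [if_pos hc1, if_pos hc2, one_mul, if_pos (hiff.mp ⟨hc1, hc2⟩)]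
        · rw [if_pos hc1, if_neg hc2, mul_zero,
            if_neg (fun h => hc2 (hiff.mpr h).2)]
        · rw [if_neg hc1, zero_mul, if_neg (fun h => hc1 (hiff.mpr h).1)]
        · rw [if_neg hc1, zero_mul, if_neg (fun h => hc1 (hiff.mpr h).1)]
      · intro u _ hu
        simp only [Matrix.of_apply]
        rw [hA u]
        by_cases hc : (v 0 = u 0 + v 1 ∧ v 1 = u 1) ∧
            ∀ i : Fin (N+2), 2 ≤ (i:ℕ) → v i = u i
        · exfalso
          apply hu
          funext i
          rcases hcases i with hi | hi | hi
          · subst hi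
            rw [hu₀0, hc.1.1]
            exact (fin2_two_torsion _ _).symm
          · subst hi
            rw [hu₀1]
            exact hc.1.2.symm
          · rw [hu₀i i (fun h0 => by rw [h0] at hi; simp at hi)]
            exact (hc.2 i hi).symm
        · rw [if_neg hc, zero_mul]
      · intro h
        exact absurd (Finset.mem_univ u₀) h

lemma permF_rec (N : ℕ) (w : Fin N → Fin 2) (j : Fin N) (h : (j:ℕ)+1 < N) :
    permF N w j = w j + permF N w ⟨(j:ℕ)+1, h⟩ := by
  unfold permF
  have hins : Finset.univ.filter (fun i : Fin N => j ≤ i)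
      = insert j (Finset.univ.filter (fun i : Fin N => (⟨(j:ℕ)+1, h⟩ : Fin N) ≤ i)) := by
    ext i
    simp only [Finset.mem_filter, Finset.mem_univ, true_and, Finset.mem_insert, Fin.le_def,
      Fin.ext_iff]
    omega
  rw [hins, Finset.sum_insert (by simp [Fin.le_def])]

lemma permF_last (N : ℕ) (w : Fin N → Fin 2) (j : Fin N) (h : (j:ℕ)+1 = N) :
    permF N w j = w j := by
  unfold permF
  have hsing : Finset.univ.filter (fun i : Fin N => j ≤ i) = {j} := by
    ext i
    simp only [Finset.mem_filter, Finset.mem_univ, true_and, Finset.mem_singleton, Fin.le_def,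
      Fin.ext_iff]
    have := i.isLt
    omega
  rw [hsing, Finset.sum_singleton]

def invPermF (N : ℕ) (v : Fin N → Fin 2) : Fin N → Fin 2 :=
  fun j => if h : (j:ℕ)+1 < N then v j + v ⟨(j:ℕ)+1, h⟩ else v j

lemma invPermF_permF (N : ℕ) (w : Fin N → Fin 2) : invPermF N (permF N w) = w := by
  funext j
  unfold invPermF
  split_ifs with h
  · rw [permF_rec N w j h]
    exact fin2_two_torsion _ _
  · exact permF_last N w j (by have := j.isLt; omega)

lemma permF_bijective (N : ℕ) : Function.Bijective (permF N) :=
  Finite.injective_iff_bijective.mp (Function.LeftInverse.injective (invPermF_permF N))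

lemma Umat_mul_conjTranspose (N : ℕ) : Umat N * (Umat N)ᴴ = 1 := by
  ext v v'
  rw [Matrix.mul_apply, Matrix.one_apply]
  obtain ⟨u₀, hu₀⟩ := (permF_bijective N).surjective v
  rw [Finset.sum_eq_single u₀]
  · rw [Matrix.conjTranspose_apply, Umat_apply, Umat_apply, if_pos hu₀.symm, one_mul]
    by_cases h : v' = permF N u₀
    · rw [if_pos h, if_pos (by rw [← hu₀, ← h]), star_one]
    · rw [if_neg h, if_neg (by rw [← hu₀]; exact fun hh => h hh.symm), star_zero]
  · intro u _ hu
    rw [Umat_apply, if_neg, zero_mul]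
    intro hv
    exact hu ((permF_bijective N).injective (by rw [← hv, hu₀]))
  · intro h
    exact absurd (Finset.mem_univ u₀) h

lemma conjTranspose_mul_Umat (N : ℕ) : (Umat N)ᴴ * Umat N = 1 := by
  ext w w'
  rw [Matrix.mul_apply, Matrix.one_apply]
  rw [Finset.sum_eq_single (permF N w)]
  · rw [Matrix.conjTranspose_apply, Umat_apply, Umat_apply, if_pos rfl, star_one, one_mul]
    by_cases h : w = w'
    · rw [if_pos (by rw [h]), if_pos h]
    · rw [if_neg (fun hh => h ((permF_bijective N).injective hh)), if_neg h]
  · intro u _ hu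
    rw [Matrix.conjTranspose_apply, Umat_apply, if_neg hu, star_zero, zero_mul]
  · intro h
    exact absurd (Finset.mem_univ _) h

lemma Umat_parity (N : ℕ) (h : 0 < N) :
    Umat N * parityQ N = localOp N ⟨0, h⟩ pauliZ * Umat N := by
  rw [parityQ_eq, localOp_pauliZ]
  ext v w
  rw [Matrix.mul_diagonal, Matrix.diagonal_mul, Umat_apply]
  by_cases hvw : v = permF N w
  · rw [if_pos hvw, one_mul, mul_one]
    rw [hvw]
    show qfun N w = chi (permF N w ⟨0, h⟩)
    unfold permF
    have huniv : Finset.univ.filter (fun i : Fin N => (⟨0, h⟩ : Fin N) ≤ i) = Finset.univ := by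
      refine Finset.filter_true_of_mem fun i _ => ?_
      rw [Fin.le_def]
      exact Nat.zero_le _
    rw [huniv, chi_sum]
    rfl
  · rw [if_neg hvw, zero_mul, mul_zero]

theorem spin_chain_algebra_commutant (N : ℕ) (hN : 0 < N) :
    ((StarAlgebra.adjoin ℂ (genSet N) : StarSubalgebra ℂ (QMat N)) : Set (QMat N)) =
      {X : QMat N | X * parityQ N = parityQ N * X} ∧
    (∀ X : QMat N, X ∈ StarAlgebra.adjoin ℂ (genSet N) ↔
      (Umat N * X * (Umat N)ᴴ) * localOp N ⟨0, hN⟩ pauliZ =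
        localOp N ⟨0, hN⟩ pauliZ * (Umat N * X * (Umat N)ᴴ)) := by
  refine ⟨part1 N, fun X => ?_⟩
  have hmem := Set.ext_iff.mp (part1 N) X
  simp only [SetLike.mem_coe, Set.mem_setOf_eq] at hmem
  rw [hmem]
  set U := Umat N with hU
  set Q := parityQ N with hQdef
  set Z := localOp N ⟨0, hN⟩ pauliZ with hZdef
  have h1 : Uᴴ * U = 1 := conjTranspose_mul_Umat N
  have h2 : U * Uᴴ = 1 := Umat_mul_conjTranspose N
  have hUQ : U * Q = Z * U := Umat_parity N hN
  have cancel1 : ∀ M : QMat N, Uᴴ * (U * M) = M := fun M => by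
    rw [← Matrix.mul_assoc, h1, Matrix.one_mul]
  have hQU : Q * Uᴴ = Uᴴ * Z := by
    have hq : Uᴴ * (Z * U) = Q := by rw [← hUQ, cancel1]
    rw [← hq]
    simp only [Matrix.mul_assoc]
    rw [h2, Matrix.mul_one]
  constructor
  · intro hc
    calc U * X * Uᴴ * Z = U * (X * (Uᴴ * Z)) := by simp only [Matrix.mul_assoc]
      _ = U * (X * (Q * Uᴴ)) := by rw [hQU]
      _ = U * ((X * Q) * Uᴴ) := by simp only [Matrix.mul_assoc]
      _ = U * ((Q * X) * Uᴴ) := by rw [hc]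
      _ = (U * Q) * (X * Uᴴ) := by simp only [Matrix.mul_assoc]
      _ = (Z * U) * (X * Uᴴ) := by rw [hUQ]
      _ = Z * (U * X * Uᴴ) := by simp only [Matrix.mul_assoc]
  · intro hc
    have e1 : Uᴴ * ((U * X * Uᴴ) * U) = X := by
      simp only [Matrix.mul_assoc]
      rw [h1, Matrix.mul_one, cancel1]
    calc X * Q = (Uᴴ * ((U * X * Uᴴ) * U)) * Q := by rw [e1]
      _ = Uᴴ * ((U * X * Uᴴ) * (U * Q)) := by simp only [Matrix.mul_assoc]
      _ = Uᴴ * ((U * X * Uᴴ) * (Z * U)) := by rw [hUQ]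
      _ = Uᴴ * (((U * X * Uᴴ) * Z) * U) := by simp only [Matrix.mul_assoc]
      _ = Uᴴ * ((Z * (U * X * Uᴴ)) * U) := by rw [hc]
      _ = (Uᴴ * Z) * ((U * X * Uᴴ) * U) := by simp only [Matrix.mul_assoc]
      _ = (Q * Uᴴ) * ((U * X * Uᴴ) * U) := by rw [hQU]
      _ = Q * (Uᴴ * ((U * X * Uᴴ) * U)) := by simp only [Matrix.mul_assoc]
      _ = Q * X := by rw [e1]

end
end
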